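/- arXiv:2404.09710 — 3 statements merged into one kernel-verified Lean document; each statement's English description precedes it below -/
import Mathlib

section
/- Let g(x) = x² + x^{2d} with d ≥ 1 an integer. Then for all x ∈ (0,1], the derivative of the inverse satisfies 1/((2d+2)√x) ≤ (g⁻¹)'(x) ≤ 1/√x. -/
open Set

/-- for `g(x) = x² + x^{2d}` with inverse `h` on `(0,∞)`, the derivative
of the inverse satisfies `1/((2d+2)√x) ≤ h'(x) ≤ 1/√x` for `x ∈ (0,1]`. -/
theorem g_inverse_deriv_bounds_interval (d : ℕ) (hd : 1 ≤ d)
    (h : ℝ → ℝ) (hinv : ∀ x : ℝ, 0 < x → 0 < h x ∧ (h x) ^ 2 + (h x) ^ (2 * d) = x) :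
    ∀ x ∈ Set.Ioc (0 : ℝ) 1,
      1 / ((2 * d + 2) * Real.sqrt x) ≤ deriv h x ∧ deriv h x ≤ 1 / Real.sqrt x := by
  set g : ℝ → ℝ := fun y => y ^ 2 + y ^ (2 * d) with hg
  have hgmono : StrictMonoOn g (Ici 0) := by
    intro a ha b hb hab
    have h1 : a ^ 2 < b ^ 2 := by
      apply pow_lt_pow_left₀ hab ha; norm_num
    have h2 : a ^ (2 * d) ≤ b ^ (2 * d) := pow_le_pow_left₀ ha hab.le _
    simpa [g] using add_lt_add_of_lt_of_le h1 h2
  have hgh : ∀ x : ℝ, 0 < x → g (h x) = x := fun x hx => (hinv x hx).2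
  have hgpos : ∀ y : ℝ, 0 < y → 0 < g y := by
    intro y hy
    have : 0 < y ^ 2 := pow_pos hy 2
    have : 0 ≤ y ^ (2 * d) := pow_nonneg hy.le _
    positivity
  have hhg : ∀ y : ℝ, 0 < y → h (g y) = y := by
    intro y hy
    have hgy := hgpos y hy
    have h1 := (hinv (g y) hgy).1
    have h2 := hgh (g y) hgy
    exact hgmono.injOn (mem_Ici.2 h1.le) (mem_Ici.2 hy.le) h2
  have hmono : StrictMonoOn h (Ioi 0) := by
    intro a ha b hb hab
    by_contra hle
    push_neg at hle
    have := hgmono.monotoneOn (mem_Ici.2 (hinv b hb).1.le) (mem_Ici.2 (hinv a ha).1.le) hle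
    rw [hgh a ha, hgh b hb] at this
    exact absurd this (not_le.2 hab)
  intro x hx
  obtain ⟨hx0, hx1⟩ := hx
  obtain ⟨hhx, hgx⟩ := hinv x hx0
  -- continuity of h at x
  have hcont : ContinuousAt h x := by
    apply hmono.continuousAt_of_image_mem_nhds (Ioi_mem_nhds hx0)
    have hsub : Ioi (0:ℝ) ⊆ h '' Ioi 0 := by
      intro z hz
      exact ⟨g z, hgpos z hz, hhg z hz⟩
    exact Filter.mem_of_superset (Ioi_mem_nhds hhx) hsub
  -- derivative of g at h x
  set y := h x with hy
  set g' : ℝ := 2 * y + (2 * d) * y ^ (2 * d - 1) with hg'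
  have hdg : HasDerivAt g g' y := by
    have h1 : HasDerivAt (fun t : ℝ => t ^ 2) (2 * y ^ 1) y := by
      simpa using hasDerivAt_pow 2 y
    have h2 : HasDerivAt (fun t : ℝ => t ^ (2 * d)) ((2 * d) * y ^ (2 * d - 1)) y := by
      simpa using hasDerivAt_pow (2 * d) y
    simpa [hg, g', pow_one, mul_comm, Pi.add_def] using h1.add h2
  have hyle : y ≤ Real.sqrt x := by
    rw [← Real.sqrt_sq hhx.le]
    apply Real.sqrt_le_sqrt
    nlinarith [pow_nonneg hhx.le (2 * d)]
  have hsx : (0:ℝ) < Real.sqrt x := Real.sqrt_pos.2 hx0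
  have hsx1 : Real.sqrt x ≤ 1 := by
    rw [show (1:ℝ) = Real.sqrt 1 by simp]; exact Real.sqrt_le_sqrt hx1
  have hy1 : y ≤ 1 := hyle.trans hsx1
  -- lower bound for y : 2 y^2 ≥ x
  have hylb : Real.sqrt x / 2 ≤ y := by
    have hpow : y ^ (2 * d) ≤ y ^ 2 := pow_le_pow_of_le_one hhx.le hy1 (by omega)
    have hx2 : x ≤ 2 * y ^ 2 := by nlinarith
    have : Real.sqrt x ≤ Real.sqrt (2 * y ^ 2) := Real.sqrt_le_sqrt hx2
    have h2y : Real.sqrt (2 * y ^ 2) ≤ 2 * y := by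
      rw [show (2:ℝ) * y ^ 2 = (2*y)*y by ring]
      calc Real.sqrt (2 * y * y) ≤ Real.sqrt ((2*y)*(2*y)) := by
            apply Real.sqrt_le_sqrt; nlinarith
        _ = 2 * y := Real.sqrt_mul_self (by linarith)
    linarith
  -- bounds on g'
  have hg'lb : Real.sqrt x ≤ g' := by
    have : 0 ≤ (2 * d : ℝ) * y ^ (2 * d - 1) := by positivity
    have := hylb
    rw [hg']; nlinarith
  have hg'ub : g' ≤ (2 * d + 2) * Real.sqrt x := by
    have hpow : y ^ (2 * d - 1) ≤ Real.sqrt x := by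
      calc y ^ (2 * d - 1) ≤ y ^ 1 := pow_le_pow_of_le_one hhx.le hy1 (by omega)
        _ = y := pow_one y
        _ ≤ Real.sqrt x := hyle
    have hdn : (0:ℝ) ≤ 2 * d := by positivity
    rw [hg']; nlinarith
  have hg'pos : 0 < g' := lt_of_lt_of_le hsx hg'lb
  have hderiv : HasDerivAt h g'⁻¹ x := by
    apply hdg.of_local_left_inverse hcont hg'pos.ne'
    filter_upwards [Ioi_mem_nhds hx0] with z hz using hgh z hz
  rw [hderiv.deriv]
  constructor
  · rw [one_div]
    apply inv_anti₀ hg'pos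
    exact hg'ub
  · rw [one_div]
    apply inv_anti₀ hsx hg'lb
end

section
/- Let ν₁, ν₂ be measures on [0,∞) and c₁, c₂ > 0 such that ν₂(A ∩ [0,1]) ≥ c₁·ν₁(A ∩ [0,1]) for all measurable A, and ν₁ ≥ c₂·ν₂ on [0,∞). Suppose there is ε > 0 such that for every sum of squares s with ∫ s dν₂ = 1, ∫ x s(x) dν₂(x) ≥ ε. Then for every sum of squares s with ∫ s dν₁ = 1 one has ∫ x s(x) dν₁(x) ≥ min{1/2, (c₁ c₂/2)·ε}. -/
open MeasureTheory

/-- `p` is a sum of squares of univariate polynomials. -/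
def IsSOS (p : Polynomial ℝ) : Prop :=
  ∃ (k : ℕ) (q : Fin k → Polynomial ℝ), p = ∑ i, (q i) ^ 2

lemma IsSOS.eval_nonneg {p : Polynomial ℝ} (hp : IsSOS p) (x : ℝ) :
    0 ≤ Polynomial.eval x p := by
  obtain ⟨k, q, rfl⟩ := hp
  simp only [Polynomial.eval_finset_sum, Polynomial.eval_pow]
  exact Finset.sum_nonneg fun i _ => sq_nonneg _

lemma IsSOS.const_mul {p : Polynomial ℝ} (hp : IsSOS p) {a : ℝ} (ha : 0 ≤ a) :
    IsSOS (Polynomial.C a * p) := by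
  obtain ⟨k, q, rfl⟩ := hp
  refine ⟨k, fun i => Polynomial.C (Real.sqrt a) * q i, ?_⟩
  rw [Finset.mul_sum]
  refine Finset.sum_congr rfl fun i _ => ?_
  rw [mul_pow, ← Polynomial.C_pow, Real.sq_sqrt ha]

/-- comparison of the push-forward programs of two measures on `[0,∞)`.
If `ν₂ ≥ c₁ ν₁` on `[0,1]`, `ν₁ ≥ c₂ ν₂` everywhere, and the program for `ν₂` is
bounded below by `ε`, then the program for `ν₁` is bounded below by
`min {1/2, c₁c₂ε/2}`. -/
theorem pushforward_program_comparison (ν₁ ν₂ : Measure ℝ)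
    (hsupp₁ : ν₁ (Set.Iio 0) = 0) (hsupp₂ : ν₂ (Set.Iio 0) = 0)
    (c₁ c₂ : ℝ) (hc₁ : 0 < c₁) (hc₂ : 0 < c₂)
    (h₁ : ∀ A : Set ℝ, MeasurableSet A →
      ENNReal.ofReal c₁ * ν₁ (A ∩ Set.Icc 0 1) ≤ ν₂ (A ∩ Set.Icc 0 1))
    (h₂ : ∀ A : Set ℝ, MeasurableSet A → ENNReal.ofReal c₂ * ν₂ A ≤ ν₁ A)
    (ε : ℝ) (hε : 0 < ε)
    (hlb : ∀ s : Polynomial ℝ, IsSOS s →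
      (∫⁻ x, ENNReal.ofReal (Polynomial.eval x s) ∂ν₂) = 1 →
      ENNReal.ofReal ε ≤ ∫⁻ x, ENNReal.ofReal (x * Polynomial.eval x s) ∂ν₂) :
    ∀ s : Polynomial ℝ, IsSOS s →
      (∫⁻ x, ENNReal.ofReal (Polynomial.eval x s) ∂ν₁) = 1 →
      ENNReal.ofReal (min (1 / 2) (c₁ * c₂ / 2 * ε))
        ≤ ∫⁻ x, ENNReal.ofReal (x * Polynomial.eval x s) ∂ν₁ := by
  intro s hs hnorm
  set f : ℝ → ENNReal := fun x => ENNReal.ofReal (Polynomial.eval x s) with hfdef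
  set g : ℝ → ENNReal := fun x => ENNReal.ofReal (x * Polynomial.eval x s) with hgdef
  by_cases hcase : ENNReal.ofReal (1 / 2) ≤ ∫⁻ x, g x ∂ν₁
  · exact le_trans (ENNReal.ofReal_le_ofReal (min_le_left _ _)) hcase
  push_neg at hcase
  set I : Set ℝ := Set.Icc 0 1 with hIdef
  have hI : MeasurableSet I := measurableSet_Icc
  have hf : Measurable f := (Polynomial.continuous s).measurable.ennreal_ofReal
  -- on Iᶜ (a.e. x, since x ≥ 0 a.e. and x ∉ [0,1], we have x > 1) : f ≤ g
  have hae : ∀ᵐ x ∂ν₁.restrict Iᶜ, f x ≤ g x := by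
    have h0 : ∀ᵐ x ∂ν₁, 0 ≤ x := by
      rw [ae_iff]
      convert hsupp₁ using 2
      ext x; simp [Set.mem_Iio]
    have h0' := ae_restrict_of_ae (s := Iᶜ) h0
    filter_upwards [h0', ae_restrict_mem hI.compl] with x hx hxI
    have hx1 : 1 ≤ x := by
      simp only [hIdef, Set.mem_compl_iff, Set.mem_Icc, not_and] at hxI
      exact le_of_lt (lt_of_not_ge (hxI hx))
    exact ENNReal.ofReal_le_ofReal (le_mul_of_one_le_left (hs.eval_nonneg x) hx1)
  have hIc_lt : ∫⁻ x in Iᶜ, f x ∂ν₁ < ENNReal.ofReal (1 / 2) := by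
    calc ∫⁻ x in Iᶜ, f x ∂ν₁ ≤ ∫⁻ x in Iᶜ, g x ∂ν₁ := lintegral_mono_ae hae
      _ ≤ ∫⁻ x, g x ∂ν₁ := setLIntegral_le_lintegral _ _
      _ < ENNReal.ofReal (1 / 2) := hcase
  -- ∫ f on I w.r.t. ν₁ is ≥ 1/2
  have hsplit : (∫⁻ x in I, f x ∂ν₁) + ∫⁻ x in Iᶜ, f x ∂ν₁ = 1 := by
    rw [lintegral_add_compl f hI]; exact hnorm
  have hIhalf : ENNReal.ofReal (1 / 2) ≤ ∫⁻ x in I, f x ∂ν₁ := by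
    by_contra h
    push_neg at h
    have := ENNReal.add_lt_add h hIc_lt
    rw [hsplit, ← ENNReal.ofReal_add (by norm_num) (by norm_num)] at this
    norm_num at this
  -- measure inequalities as Measure.le
  have hle₁ : (ENNReal.ofReal c₁ • ν₁).restrict I ≤ ν₂.restrict I := by
    refine Measure.le_iff.2 fun A hA => ?_
    rw [Measure.restrict_apply hA, Measure.restrict_apply hA, Measure.smul_apply,
      smul_eq_mul]
    exact h₁ A hA
  have hle₂ : (ENNReal.ofReal c₂ • ν₂) ≤ ν₁ := by
    refine Measure.le_iff.2 fun A hA => ?_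
    rw [Measure.smul_apply, smul_eq_mul]
    exact h₂ A hA
  set T : ENNReal := ∫⁻ x, f x ∂ν₂ with hTdef
  -- lower bound on T
  have hTlow : ENNReal.ofReal (c₁ / 2) ≤ T := by
    have : ENNReal.ofReal c₁ * ∫⁻ x in I, f x ∂ν₁ ≤ T := by
      calc ENNReal.ofReal c₁ * ∫⁻ x in I, f x ∂ν₁
          = ∫⁻ x, f x ∂((ENNReal.ofReal c₁ • ν₁).restrict I) := by
            rw [Measure.restrict_smul, lintegral_smul_measure, smul_eq_mul]
        _ ≤ ∫⁻ x, f x ∂(ν₂.restrict I) := lintegral_mono' hle₁ le_rfl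
        _ ≤ T := lintegral_mono' Measure.restrict_le_self le_rfl
    calc ENNReal.ofReal (c₁ / 2) = ENNReal.ofReal c₁ * ENNReal.ofReal (1 / 2) := by
          rw [← ENNReal.ofReal_mul hc₁.le]; congr 1; ring
      _ ≤ ENNReal.ofReal c₁ * ∫⁻ x in I, f x ∂ν₁ :=
          mul_le_mul_right hIhalf _
      _ ≤ T := this
  -- upper bound on T: c₂ T ≤ 1
  have hTup : ENNReal.ofReal c₂ * T ≤ 1 := by
    calc ENNReal.ofReal c₂ * T = ∫⁻ x, f x ∂(ENNReal.ofReal c₂ • ν₂) := by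
          rw [lintegral_smul_measure, smul_eq_mul]
      _ ≤ ∫⁻ x, f x ∂ν₁ := lintegral_mono' hle₂ le_rfl
      _ = 1 := hnorm
  have hTne : T ≠ ⊤ := by
    intro h
    rw [h, ENNReal.mul_top (by simp [ENNReal.ofReal_eq_zero, not_le, hc₂])] at hTup
    simp at hTup
  set t : ℝ := T.toReal with htdef
  have htpos : 0 < t := by
    refine ENNReal.toReal_pos (fun h => ?_) hTne
    rw [h] at hTlow
    simp only [nonpos_iff_eq_zero, ENNReal.ofReal_eq_zero] at hTlow
    nlinarith
  have hTt : T = ENNReal.ofReal t := (ENNReal.ofReal_toReal hTne).symm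
  have ht_low : c₁ / 2 ≤ t := by
    rw [hTt] at hTlow
    exact (ENNReal.ofReal_le_ofReal_iff htpos.le).1 hTlow
  -- scaled polynomial
  set s' : Polynomial ℝ := Polynomial.C t⁻¹ * s with hs'def
  have hs' : IsSOS s' := hs.const_mul (inv_nonneg.2 htpos.le)
  have heval : ∀ x, Polynomial.eval x s' = t⁻¹ * Polynomial.eval x s := by
    intro x; simp [hs'def]
  have hnorm' : (∫⁻ x, ENNReal.ofReal (Polynomial.eval x s') ∂ν₂) = 1 := by
    have : (fun x => ENNReal.ofReal (Polynomial.eval x s'))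
        = fun x => ENNReal.ofReal t⁻¹ * f x := by
      funext x
      rw [heval, ENNReal.ofReal_mul (inv_nonneg.2 htpos.le)]
    rw [this, lintegral_const_mul' _ _ ENNReal.ofReal_ne_top, ← hTdef, hTt,
      ← ENNReal.ofReal_mul (inv_nonneg.2 htpos.le), inv_mul_cancel₀ htpos.ne',
      ENNReal.ofReal_one]
  have hεT := hlb s' hs' hnorm'
  have hglb : ENNReal.ofReal (ε * t) ≤ ∫⁻ x, g x ∂ν₂ := by
    have heq : (fun x => ENNReal.ofReal (x * Polynomial.eval x s'))
        = fun x => ENNReal.ofReal t⁻¹ * g x := by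
      funext x
      rw [heval]
      rw [show x * (t⁻¹ * Polynomial.eval x s) = t⁻¹ * (x * Polynomial.eval x s) by ring,
        ENNReal.ofReal_mul (inv_nonneg.2 htpos.le)]
    rw [heq, lintegral_const_mul' _ _ ENNReal.ofReal_ne_top] at hεT
    calc ENNReal.ofReal (ε * t) = ENNReal.ofReal t * ENNReal.ofReal ε := by
          rw [← ENNReal.ofReal_mul htpos.le]; ring_nf
      _ ≤ ENNReal.ofReal t * (ENNReal.ofReal t⁻¹ * ∫⁻ x, g x ∂ν₂) :=
          mul_le_mul_right hεT _
      _ = (ENNReal.ofReal t * ENNReal.ofReal t⁻¹) * ∫⁻ x, g x ∂ν₂ := by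
          rw [mul_assoc]
      _ = ∫⁻ x, g x ∂ν₂ := by
          rw [← ENNReal.ofReal_mul htpos.le, mul_inv_cancel₀ htpos.ne',
            ENNReal.ofReal_one, one_mul]
  -- final chain
  calc ENNReal.ofReal (min (1 / 2) (c₁ * c₂ / 2 * ε))
      ≤ ENNReal.ofReal (c₂ * (ε * t)) := by
        refine ENNReal.ofReal_le_ofReal (le_trans (min_le_right _ _) ?_)
        nlinarith [mul_le_mul_of_nonneg_left ht_low (by positivity : (0:ℝ) ≤ c₂ * ε)]
    _ = ENNReal.ofReal c₂ * ENNReal.ofReal (ε * t) := by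
        rw [← ENNReal.ofReal_mul hc₂.le]
    _ ≤ ENNReal.ofReal c₂ * ∫⁻ x, g x ∂ν₂ := mul_le_mul_right hglb _
    _ = ∫⁻ x, g x ∂(ENNReal.ofReal c₂ • ν₂) := by rw [lintegral_smul_measure, smul_eq_mul]
    _ ≤ ∫⁻ x, g x ∂ν₁ := lintegral_mono' hle₂ le_rfl
end

section
/- Let α > 0, d > α an integer, g(x) = x² + x^{2d}, f(x) = x². Then there exist constants c₁, c₂ > 0 and β ∈ (0,1) such that, Lebesgue-a.e., d(f_#Γ_β)/dλ (x) ≥ c₁·d(g_#Γ_α)/dλ (x) for all x ∈ [0,1], and d(g_#Γ_α)/dλ (x) ≥ c₂·d(f_#Γ_β)/dλ (x) for all x ∈ [0,∞). -/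
open MeasureTheory

/-- The probability measure `Γ_a` on `ℝ` with density proportional to `exp(-|x|^a)`. -/
noncomputable def gammaMeasure (a : ℝ) : Measure ℝ :=
  ((volume.withDensity fun x => ENNReal.ofReal (Real.exp (-(|x| ^ a)))) Set.univ)⁻¹ •
    (volume.withDensity fun x => ENNReal.ofReal (Real.exp (-(|x| ^ a))))

open Real Set Filter
open scoped ENNReal

lemma aux_one_add_pow_le_exp (p : ℝ) (hp : 0 < p) (n : ℕ) :
    ∃ C > (0 : ℝ), ∀ y : ℝ, 0 ≤ y → 1 + y ^ n ≤ C * Real.exp (y ^ p) := by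
  obtain ⟨m, hm⟩ : ∃ m : ℕ, (n : ℝ) ≤ m * p := by
    obtain ⟨m, hm⟩ := exists_nat_ge ((n : ℝ) / p)
    exact ⟨m, by rwa [div_le_iff₀ hp] at hm⟩
  have hfac : (1 : ℝ) ≤ (m.factorial : ℝ) :=
    (Nat.one_le_cast (α := ℝ)).mpr (Nat.one_le_iff_ne_zero.mpr (Nat.factorial_ne_zero m))
  refine ⟨1 + (m.factorial : ℝ), by positivity, fun y hy => ?_⟩
  have hexp1 : (1 : ℝ) ≤ Real.exp (y ^ p) := by
    rw [← Real.exp_zero]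
    exact Real.exp_le_exp.mpr (Real.rpow_nonneg hy p)
  rcases le_or_gt y 1 with h1 | h1
  · have : y ^ n ≤ 1 := pow_le_one₀ hy h1
    nlinarith
  · have h2 : y ^ n ≤ y ^ ((m : ℝ) * p) := by
      rw [← Real.rpow_natCast y n]
      exact Real.rpow_le_rpow_of_exponent_le h1.le (by linarith)
    have h3 : y ^ ((m : ℝ) * p) = (y ^ p) ^ m := by
      rw [mul_comm, Real.rpow_mul hy, Real.rpow_natCast]
    have h4 : (y ^ p) ^ m / (m.factorial : ℝ) ≤ Real.exp (y ^ p) :=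
      Real.pow_div_factorial_le_exp (x := y ^ p) (Real.rpow_nonneg hy p) m
    rw [div_le_iff₀ (by positivity)] at h4
    have h5 : y ^ n ≤ (m.factorial : ℝ) * Real.exp (y ^ p) := by
      calc y ^ n ≤ (y ^ p) ^ m := h2.trans_eq h3
        _ ≤ (m.factorial : ℝ) * Real.exp (y ^ p) := by linarith
    nlinarith

lemma aux_master (a c : ℝ) (ha : 0 < a) (hac : a < c) (n : ℕ) :
    ∃ C > (0 : ℝ), ∀ y : ℝ, 0 ≤ y →
      (1 + y ^ n) * Real.exp (- y ^ c) ≤ C * Real.exp (- y ^ a) := by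
  have hc : 0 < c := ha.trans hac
  obtain ⟨C₀, hC₀, h₀⟩ := aux_one_add_pow_le_exp c hc n
  set s : ℝ := (2 : ℝ) ^ (-(1/c)) with hs_def
  have hs0 : 0 < s := Real.rpow_pos_of_pos two_pos _
  have hs1 : s ≤ 1 := by
    rw [hs_def]
    apply Real.rpow_le_one_of_one_le_of_nonpos one_le_two
    exact neg_nonpos.mpr (le_of_lt (one_div_pos.mpr hc))
  have hsc : s ^ c = 1 / 2 := by
    rw [hs_def, ← Real.rpow_mul (by norm_num : (0:ℝ) ≤ 2), neg_mul, one_div,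
      inv_mul_cancel₀ hc.ne', Real.rpow_neg_one]
    norm_num
  set R : ℝ := max 1 ((2 : ℝ) ^ ((c - a)⁻¹)) with hR_def
  have hR1 : (1 : ℝ) ≤ R := le_max_left _ _
  have hR0 : (0 : ℝ) ≤ R := by linarith
  refine ⟨(1 + R ^ n) * Real.exp (R ^ a) + C₀ * (s⁻¹) ^ n, by positivity, fun y hy => ?_⟩
  rcases le_or_gt y R with hyR | hyR
  · -- small y
    have h1 : y ^ a ≤ R ^ a := Real.rpow_le_rpow hy hyR ha.le
    have h2 : (1 : ℝ) ≤ Real.exp (R ^ a) * Real.exp (- y ^ a) := by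
      rw [← Real.exp_add, ← Real.exp_zero]
      exact Real.exp_le_exp.mpr (by linarith)
    have h3 : (1 + y ^ n) * Real.exp (- y ^ c) ≤ 1 + R ^ n := by
      have hexp : Real.exp (- y ^ c) ≤ 1 :=
        Real.exp_le_one_iff.mpr (neg_nonpos.mpr (Real.rpow_nonneg hy c))
      have hpow : y ^ n ≤ R ^ n := pow_le_pow_left₀ hy hyR n
      nlinarith [pow_nonneg hy n]
    have h4 : (0:ℝ) ≤ C₀ * (s⁻¹) ^ n * Real.exp (- y ^ a) := by positivity
    have h5 : (1 + R ^ n) ≤ (1 + R ^ n) * Real.exp (R ^ a) * Real.exp (- y ^ a) := by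
      nlinarith [pow_nonneg hR0 n]
    nlinarith
  · -- large y
    have hy1 : (1 : ℝ) < y := lt_of_le_of_lt hR1 hyR
    have hy0 : (0 : ℝ) < y := by linarith
    have h2 : (2 : ℝ) ≤ y ^ (c - a) := by
      have : (2 : ℝ) ^ ((c - a)⁻¹) ≤ y := le_of_lt (lt_of_le_of_lt (le_max_right _ _) hyR)
      calc (2 : ℝ) = ((2 : ℝ) ^ ((c - a)⁻¹)) ^ (c - a) := by
            rw [← Real.rpow_mul (by norm_num : (0:ℝ) ≤ 2), inv_mul_cancel₀ (by linarith : c - a ≠ 0), Real.rpow_one]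
        _ ≤ y ^ (c - a) := Real.rpow_le_rpow (Real.rpow_nonneg (by norm_num) _) this (by linarith)
    have hsplit : y ^ c = y ^ a * y ^ (c - a) := by
      rw [← Real.rpow_add hy0]; ring_nf
    have hhalf : y ^ a ≤ y ^ c / 2 := by
      have hya : (0:ℝ) < y ^ a := Real.rpow_pos_of_pos hy0 a
      rw [hsplit]; nlinarith
    have hsy : (s * y) ^ c = y ^ c / 2 := by
      rw [Real.mul_rpow hs0.le hy, hsc]; ring
    have hmain := h₀ (s * y) (by positivity)
    rw [hsy] at hmain
    have hsn : s ^ n * (1 + y ^ n) ≤ 1 + (s * y) ^ n := by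
      have : s ^ n ≤ 1 := pow_le_one₀ hs0.le hs1
      have h' : (s * y) ^ n = s ^ n * y ^ n := mul_pow s y n
      nlinarith [pow_nonneg hy n, pow_pos hs0 n]
    have hsn_pos : (0:ℝ) < s ^ n := pow_pos hs0 n
    have key : 1 + y ^ n ≤ C₀ * (s⁻¹) ^ n * Real.exp (y ^ c / 2) := by
      have h6 : 1 + y ^ n ≤ C₀ * Real.exp (y ^ c / 2) / s ^ n :=
        (le_div_iff₀ hsn_pos).mpr (by nlinarith [hsn.trans hmain])
      calc 1 + y ^ n ≤ C₀ * Real.exp (y ^ c / 2) / s ^ n := h6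
        _ = C₀ * (s⁻¹) ^ n * Real.exp (y ^ c / 2) := by rw [inv_pow]; ring
    have hfin : Real.exp (y ^ c / 2) * Real.exp (- y ^ c) ≤ Real.exp (- y ^ a) := by
      rw [← Real.exp_add]
      exact Real.exp_le_exp.mpr (by linarith)
    have hexp_pos : (0:ℝ) < Real.exp (- y ^ c) := Real.exp_pos _
    calc (1 + y ^ n) * Real.exp (- y ^ c)
        ≤ (C₀ * (s⁻¹) ^ n * Real.exp (y ^ c / 2)) * Real.exp (- y ^ c) := by
          apply mul_le_mul_of_nonneg_right key hexp_pos.le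
      _ = C₀ * (s⁻¹) ^ n * (Real.exp (y ^ c / 2) * Real.exp (- y ^ c)) := by ring
      _ ≤ C₀ * (s⁻¹) ^ n * Real.exp (- y ^ a) := by
          apply mul_le_mul_of_nonneg_left hfin (by positivity)
      _ ≤ ((1 + R ^ n) * Real.exp (R ^ a) + C₀ * (s⁻¹) ^ n) * Real.exp (- y ^ a) := by
          apply mul_le_mul_of_nonneg_right _ (Real.exp_pos _).le
          nlinarith [pow_nonneg hR0 n, Real.exp_pos (R ^ a)]

noncomputable def phiFn (d : ℕ) (x : ℝ) : ℝ := x * Real.sqrt (1 + x ^ (2 * d - 2))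

noncomputable def phiD (d : ℕ) (x : ℝ) : ℝ :=
  Real.sqrt (1 + x ^ (2 * d - 2)) +
    x * (1 / (2 * Real.sqrt (1 + x ^ (2 * d - 2))) * (((2 * d - 2 : ℕ) : ℝ) * x ^ (2 * d - 3)))

lemma pow_even_nonneg (d : ℕ) (x : ℝ) : 0 ≤ x ^ (2 * d - 2) := by
  have h : x ^ (2 * d - 2) = (x ^ (d - 1)) ^ 2 := by
    rw [← pow_mul]; congr 1; omega
  rw [h]; positivity

lemma u_ge_one (d : ℕ) (x : ℝ) : (1 : ℝ) ≤ 1 + x ^ (2 * d - 2) := by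
  linarith [pow_even_nonneg d x]

lemma u_pos (d : ℕ) (x : ℝ) : (0 : ℝ) < 1 + x ^ (2 * d - 2) :=
  lt_of_lt_of_le one_pos (u_ge_one d x)

lemma sqrt_u_ge_one (d : ℕ) (x : ℝ) : 1 ≤ Real.sqrt (1 + x ^ (2 * d - 2)) := by
  have h := Real.sqrt_le_sqrt (u_ge_one d x)
  rwa [Real.sqrt_one] at h

lemma sqrt_u_pos (d : ℕ) (x : ℝ) : 0 < Real.sqrt (1 + x ^ (2 * d - 2)) :=
  lt_of_lt_of_le one_pos (sqrt_u_ge_one d x)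

lemma hasDerivAt_phiFn (d : ℕ) (x : ℝ) : HasDerivAt (phiFn d) (phiD d x) x := by
  have h1 : HasDerivAt (fun y : ℝ => 1 + y ^ (2 * d - 2))
      (((2 * d - 2 : ℕ) : ℝ) * x ^ (2 * d - 3)) x := by
    have := (hasDerivAt_pow (2 * d - 2) x).const_add 1
    rw [show 2 * d - 2 - 1 = 2 * d - 3 by omega] at this
    simpa using this
  have h2 : HasDerivAt (fun y : ℝ => Real.sqrt (1 + y ^ (2 * d - 2)))
      (1 / (2 * Real.sqrt (1 + x ^ (2 * d - 2))) * (((2 * d - 2 : ℕ) : ℝ) * x ^ (2 * d - 3))) x := by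
    have hs := Real.hasDerivAt_sqrt (ne_of_gt (u_pos d x))
    simpa [Function.comp_def] using (hs.comp x h1)
  have h3 := (hasDerivAt_id x).mul h2
  unfold phiFn
  simpa [phiFn, phiD, one_mul, Pi.mul_def] using h3

lemma term_eq (d : ℕ) (hd : 2 ≤ d) (x : ℝ) :
    x * (((2 * d - 2 : ℕ) : ℝ) * x ^ (2 * d - 3)) = ((2 * d - 2 : ℕ) : ℝ) * x ^ (2 * d - 2) := by
  have h : x * x ^ (2 * d - 3) = x ^ (2 * d - 2) := by
    rw [← pow_succ']
    congr 1; omega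
  calc x * (((2 * d - 2 : ℕ) : ℝ) * x ^ (2 * d - 3))
      = ((2 * d - 2 : ℕ) : ℝ) * (x * x ^ (2 * d - 3)) := by ring
    _ = ((2 * d - 2 : ℕ) : ℝ) * x ^ (2 * d - 2) := by rw [h]

lemma term_nonneg (d : ℕ) (x : ℝ) :
    0 ≤ x * (1 / (2 * Real.sqrt (1 + x ^ (2 * d - 2))) * (((2 * d - 2 : ℕ) : ℝ) * x ^ (2 * d - 3))) := by
  rcases le_or_gt d 1 with hd | hd
  · have : (2 * d - 2 : ℕ) = 0 := by omega
    simp [this]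
  · have h : x * (1 / (2 * Real.sqrt (1 + x ^ (2 * d - 2))) * (((2 * d - 2 : ℕ) : ℝ) * x ^ (2 * d - 3)))
        = 1 / (2 * Real.sqrt (1 + x ^ (2 * d - 2))) * (((2 * d - 2 : ℕ) : ℝ) * x ^ (2 * d - 2)) := by
      rw [show x * (1 / (2 * Real.sqrt (1 + x ^ (2 * d - 2))) * (((2 * d - 2 : ℕ) : ℝ) * x ^ (2 * d - 3)))
          = 1 / (2 * Real.sqrt (1 + x ^ (2 * d - 2))) * (x * (((2 * d - 2 : ℕ) : ℝ) * x ^ (2 * d - 3))) from by ring,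
        term_eq d hd x]
    rw [h]
    have := pow_even_nonneg d x
    have := sqrt_u_pos d x
    positivity

lemma phiD_ge_one (d : ℕ) (x : ℝ) : 1 ≤ phiD d x := by
  have h1 := sqrt_u_ge_one d x
  have h2 := term_nonneg d x
  unfold phiD; linarith

lemma phiD_pos (d : ℕ) (x : ℝ) : 0 < phiD d x := lt_of_lt_of_le one_pos (phiD_ge_one d x)

lemma phiD_le (d : ℕ) (x : ℝ) : phiD d x ≤ (1 + d) * (1 + x ^ (2 * d - 2)) := by
  have hu := u_ge_one d x
  have hs1 := sqrt_u_ge_one d x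
  have hs0 := sqrt_u_pos d x
  have hp := pow_even_nonneg d x
  have hsqrt_le : Real.sqrt (1 + x ^ (2 * d - 2)) ≤ 1 + x ^ (2 * d - 2) := by
    have h := Real.sqrt_le_sqrt (show (1 + x ^ (2 * d - 2) : ℝ) ≤ (1 + x ^ (2 * d - 2)) ^ 2 by nlinarith)
    rwa [Real.sqrt_sq (by linarith : (0:ℝ) ≤ 1 + x ^ (2 * d - 2))] at h
  have hterm : x * (1 / (2 * Real.sqrt (1 + x ^ (2 * d - 2))) * (((2 * d - 2 : ℕ) : ℝ) * x ^ (2 * d - 3)))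
      ≤ (d : ℝ) * x ^ (2 * d - 2) := by
    rcases le_or_gt d 1 with hd | hd
    · have h0 : (2 * d - 2 : ℕ) = 0 := by omega
      simp [h0]
    · have h : x * (1 / (2 * Real.sqrt (1 + x ^ (2 * d - 2))) * (((2 * d - 2 : ℕ) : ℝ) * x ^ (2 * d - 3)))
          = (((2 * d - 2 : ℕ) : ℝ) * x ^ (2 * d - 2)) / (2 * Real.sqrt (1 + x ^ (2 * d - 2))) := by
        rw [show x * (1 / (2 * Real.sqrt (1 + x ^ (2 * d - 2))) * (((2 * d - 2 : ℕ) : ℝ) * x ^ (2 * d - 3)))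
            = 1 / (2 * Real.sqrt (1 + x ^ (2 * d - 2))) * (x * (((2 * d - 2 : ℕ) : ℝ) * x ^ (2 * d - 3))) from by ring,
          term_eq d hd x]
        ring
      rw [h]
      have hnum : ((2 * d - 2 : ℕ) : ℝ) * x ^ (2 * d - 2) ≤ (2 * d : ℝ) * x ^ (2 * d - 2) := by
        have : ((2 * d - 2 : ℕ) : ℝ) ≤ (2 * d : ℝ) := by
          have : (2 * d - 2 : ℕ) ≤ 2 * d := by omega
          exact_mod_cast le_trans (Nat.cast_le.mpr this) (by norm_num)
        nlinarith
      have hden : (2 : ℝ) ≤ 2 * Real.sqrt (1 + x ^ (2 * d - 2)) := by linarith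
      calc ((2 * d - 2 : ℕ) : ℝ) * x ^ (2 * d - 2) / (2 * Real.sqrt (1 + x ^ (2 * d - 2)))
          ≤ (2 * d : ℝ) * x ^ (2 * d - 2) / 2 := by
            apply div_le_div₀ (by positivity) hnum (by norm_num) hden
        _ = (d : ℝ) * x ^ (2 * d - 2) := by ring
  unfold phiD
  have hd0 : (0 : ℝ) ≤ d := Nat.cast_nonneg d
  nlinarith

lemma phiFn_sq (d : ℕ) (hd : 1 ≤ d) (x : ℝ) : (phiFn d x) ^ 2 = x ^ 2 + x ^ (2 * d) := by
  unfold phiFn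
  rw [mul_pow, Real.sq_sqrt (by linarith [u_ge_one d x])]
  rw [mul_add, mul_one, ← pow_add]
  congr 2; omega

lemma strictMono_phiFn (d : ℕ) : StrictMono (phiFn d) := by
  apply strictMono_of_deriv_pos
  intro x
  rw [(hasDerivAt_phiFn d x).deriv]
  exact phiD_pos d x

lemma continuous_phiFn (d : ℕ) : Continuous (phiFn d) := by
  unfold phiFn
  fun_prop

lemma abs_le_abs_phiFn (d : ℕ) (x : ℝ) : |x| ≤ |phiFn d x| := by
  unfold phiFn
  rw [abs_mul, abs_of_nonneg (Real.sqrt_nonneg _)]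
  exact le_mul_of_one_le_right (abs_nonneg x) (sqrt_u_ge_one d x)

lemma pow_abs_le_abs_phiFn (d : ℕ) (hd : 1 ≤ d) (x : ℝ) : |x| ^ d ≤ |phiFn d x| := by
  have h1 : (|x| ^ d) ^ 2 = x ^ (2 * d) := by
    rw [← pow_mul, show d * 2 = 2 * d from mul_comm d 2, pow_mul, pow_mul, sq_abs]
  have h2 : (|x| ^ d) ^ 2 ≤ (phiFn d x) ^ 2 := by
    rw [h1, phiFn_sq d hd x]; nlinarith [sq_nonneg x]
  calc |x| ^ d = Real.sqrt ((|x| ^ d) ^ 2) := (Real.sqrt_sq (by positivity)).symm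
    _ ≤ Real.sqrt ((phiFn d x) ^ 2) := Real.sqrt_le_sqrt h2
    _ = |phiFn d x| := Real.sqrt_sq_eq_abs _

lemma surjective_phiFn (d : ℕ) : Function.Surjective (phiFn d) := by
  apply Continuous.surjective (continuous_phiFn d)
  · apply tendsto_atTop_mono' _ _ tendsto_id
    filter_upwards [eventually_ge_atTop (0:ℝ)] with x hx
    show x ≤ phiFn d x
    unfold phiFn
    exact le_mul_of_one_le_right hx (sqrt_u_ge_one d x)
  · apply tendsto_atBot_mono' _ _ tendsto_id
    filter_upwards [eventually_le_atBot (0:ℝ)] with x hx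
    show phiFn d x ≤ x
    unfold phiFn
    nlinarith [sqrt_u_ge_one d x]

noncomputable def nuM (a : ℝ) : Measure ℝ :=
  volume.withDensity fun x => ENNReal.ofReal (Real.exp (-(|x| ^ a)))

lemma measurable_dens (a : ℝ) :
    Measurable fun x : ℝ => ENNReal.ofReal (Real.exp (-(|x| ^ a))) := by
  apply ENNReal.measurable_ofReal.comp
  apply Real.measurable_exp.comp
  exact (measurable_abs.pow_const a).neg

lemma nuM_lt_top (a : ℝ) (ha : 0 < a) : nuM a Set.univ < ∞ := by
  obtain ⟨C, hC, h⟩ := aux_one_add_pow_le_exp a ha 2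
  rw [nuM, withDensity_apply _ MeasurableSet.univ, setLIntegral_univ]
  have hbound : ∀ x : ℝ, ENNReal.ofReal (Real.exp (-(|x| ^ a)))
      ≤ ENNReal.ofReal (C * (1 + x ^ 2)⁻¹) := by
    intro x
    apply ENNReal.ofReal_le_ofReal
    have h1 := h |x| (abs_nonneg x)
    have h2 : (0:ℝ) < 1 + x ^ 2 := by positivity
    have h3 : |x| ^ 2 = x ^ 2 := sq_abs x
    rw [h3] at h1
    have hid : Real.exp (-(|x| ^ a)) * Real.exp (|x| ^ a) = 1 := by
      rw [← Real.exp_add]; simp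
    have h5 : Real.exp (-(|x| ^ a)) ≤ C / (1 + x ^ 2) := by
      rw [le_div_iff₀ h2]
      nlinarith [mul_le_mul_of_nonneg_left h1 (Real.exp_pos (-(|x| ^ a))).le, hid]
    rw [div_eq_mul_inv] at h5
    exact h5
  calc (∫⁻ x, ENNReal.ofReal (Real.exp (-(|x| ^ a))))
      ≤ ∫⁻ x : ℝ, ENNReal.ofReal (C * (1 + x ^ 2)⁻¹) := lintegral_mono hbound
    _ < ∞ := (integrable_inv_one_add_sq.const_mul C).lintegral_lt_top

lemma nuM_pos (a : ℝ) (ha : 0 < a) : 0 < nuM a Set.univ := by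
  have h1 : nuM a (Set.Icc 0 1) ≤ nuM a Set.univ := measure_mono (Set.subset_univ _)
  refine lt_of_lt_of_le ?_ h1
  rw [nuM, withDensity_apply _ measurableSet_Icc]
  have h2 : ENNReal.ofReal (Real.exp (-1)) * volume (Set.Icc (0:ℝ) 1)
      ≤ ∫⁻ x in Set.Icc (0:ℝ) 1, ENNReal.ofReal (Real.exp (-(|x| ^ a))) := by
    rw [← setLIntegral_const]
    apply setLIntegral_mono' measurableSet_Icc
    intro x hx
    apply ENNReal.ofReal_le_ofReal
    apply Real.exp_le_exp.mpr
    have hx1 : |x| ≤ 1 := by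
      rw [abs_le]; exact ⟨by linarith [hx.1], hx.2⟩
    have : |x| ^ a ≤ 1 := Real.rpow_le_one (abs_nonneg x) hx1 ha.le
    linarith
  refine lt_of_lt_of_le ?_ h2
  rw [Real.volume_Icc]
  norm_num
  positivity

lemma cv_lintegral (d : ℕ) {s : Set ℝ} (hs : MeasurableSet s) (h : ℝ → ℝ≥0∞) :
    ∫⁻ t in phiFn d '' s, h t = ∫⁻ x in s, ENNReal.ofReal |phiD d x| * h (phiFn d x) := by
  have := lintegral_image_eq_lintegral_abs_det_fderiv_mul volume hs
    (f' := fun x => ContinuousLinearMap.smulRight (1 : ℝ →L[ℝ] ℝ) (phiD d x))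
    (fun x _ => ((hasDerivAt_phiFn d x).hasFDerivAt).hasFDerivWithinAt)
    ((strictMono_phiFn d).injective.injOn) h
  simpa [ContinuousLinearMap.det_toSpanSingleton] using this

lemma map_phi_apply (d : ℕ) (a : ℝ) {E : Set ℝ} (hE : MeasurableSet E) :
    (Measure.map (phiFn d) (nuM a)) E
      = ∫⁻ x in phiFn d ⁻¹' E, ENNReal.ofReal (Real.exp (-(|x| ^ a))) := by
  rw [Measure.map_apply (continuous_phiFn d).measurable hE, nuM,
    withDensity_apply _ ((continuous_phiFn d).measurable hE)]

lemma nu_apply_cv (d : ℕ) (b : ℝ) {E : Set ℝ} (hE : MeasurableSet E) :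
    nuM b E = ∫⁻ x in phiFn d ⁻¹' E,
      ENNReal.ofReal |phiD d x| * ENNReal.ofReal (Real.exp (-(|phiFn d x| ^ b))) := by
  have himg : phiFn d '' (phiFn d ⁻¹' E) = E := Set.image_preimage_eq E (surjective_phiFn d)
  calc nuM b E = ∫⁻ t in phiFn d '' (phiFn d ⁻¹' E), ENNReal.ofReal (Real.exp (-(|t| ^ b))) := by
        rw [himg, nuM, withDensity_apply _ hE]
    _ = _ := cv_lintegral d ((continuous_phiFn d).measurable hE) _

lemma coreB (d : ℕ) (a b : ℝ) (hd : 1 ≤ d) (ha : 0 < a) (hb : 0 < b) (hab : a < d * b) :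
    ∃ cB > (0:ℝ), (ENNReal.ofReal cB) • nuM b ≤ Measure.map (phiFn d) (nuM a) := by
  obtain ⟨C, hC, hmaster⟩ := aux_master a ((d : ℝ) * b) ha hab (2 * d - 2)
  set K : ℝ := ((1 + (d : ℝ)) * C) with hK
  have hKpos : 0 < K := by positivity
  refine ⟨K⁻¹, by positivity, ?_⟩
  rw [Measure.le_iff]
  intro E hE
  rw [Measure.smul_apply, smul_eq_mul, nu_apply_cv d b hE, map_phi_apply d a hE,
    ← lintegral_const_mul' _ _ ENNReal.ofReal_ne_top]
  apply lintegral_mono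
  intro x
  dsimp only
  rw [← ENNReal.ofReal_mul (by positivity), ← ENNReal.ofReal_mul (by positivity)]
  apply ENNReal.ofReal_le_ofReal
  -- real inequality : K⁻¹ * (|phiD| * exp (-(|phi x| ^ b))) ≤ exp (-(|x| ^ a))
  have habs : |phiD d x| = phiD d x := abs_of_pos (phiD_pos d x)
  have h1 : |phiD d x| ≤ (1 + (d:ℝ)) * (1 + |x| ^ (2 * d - 2)) := by
    have hxp : |x| ^ (2 * d - 2) = x ^ (2 * d - 2) := by
      rw [← abs_pow, abs_of_nonneg (pow_even_nonneg d x)]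
    rw [habs, hxp]
    exact phiD_le d x
  have h2 : |x| ^ ((d:ℝ) * b) ≤ |phiFn d x| ^ b := by
    have hpow : |x| ^ ((d:ℝ) * b) = (|x| ^ d) ^ b := by
      rw [← Real.rpow_natCast |x| d, ← Real.rpow_mul (abs_nonneg x)]
    rw [hpow]
    exact Real.rpow_le_rpow (by positivity) (pow_abs_le_abs_phiFn d hd x) hb.le
  have h3 : Real.exp (-(|phiFn d x| ^ b)) ≤ Real.exp (-(|x| ^ ((d:ℝ) * b))) :=
    Real.exp_le_exp.mpr (by linarith)
  have h4 := hmaster |x| (abs_nonneg x)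
  -- (1 + |x|^(2d-2)) * exp(-(|x|^(db))) ≤ C * exp(-(|x|^a))
  have h5 : |phiD d x| * Real.exp (-(|phiFn d x| ^ b))
      ≤ (1 + (d:ℝ)) * ((1 + |x| ^ (2 * d - 2)) * Real.exp (-(|x| ^ ((d:ℝ) * b)))) := by
    have e1 : (0:ℝ) ≤ Real.exp (-(|phiFn d x| ^ b)) := (Real.exp_pos _).le
    have e2 : (0:ℝ) ≤ |phiD d x| := abs_nonneg _
    calc |phiD d x| * Real.exp (-(|phiFn d x| ^ b))
        ≤ ((1 + (d:ℝ)) * (1 + |x| ^ (2 * d - 2))) * Real.exp (-(|x| ^ ((d:ℝ) * b))) := by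
          apply mul_le_mul h1 h3 e1 (by positivity)
      _ = _ := by ring
  have h6 : |phiD d x| * Real.exp (-(|phiFn d x| ^ b)) ≤ K * Real.exp (-(|x| ^ a)) := by
    calc |phiD d x| * Real.exp (-(|phiFn d x| ^ b))
        ≤ (1 + (d:ℝ)) * ((1 + |x| ^ (2 * d - 2)) * Real.exp (-(|x| ^ ((d:ℝ) * b)))) := h5
      _ ≤ (1 + (d:ℝ)) * (C * Real.exp (-(|x| ^ a))) := by
          apply mul_le_mul_of_nonneg_left _ (by positivity)
          exact h4
      _ = K * Real.exp (-(|x| ^ a)) := by rw [hK]; ring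
  rw [inv_mul_le_iff₀ hKpos]
  exact h6

lemma coreA (d : ℕ) (a b : ℝ) (hd : 1 ≤ d) (ha : 0 < a) (hb : 0 < b) :
    (ENNReal.ofReal (Real.exp (-1))) •
        (Measure.map (phiFn d) (nuM a)).restrict ((fun x : ℝ => x ^ 2) ⁻¹' Set.Icc 0 1)
      ≤ (nuM b).restrict ((fun x : ℝ => x ^ 2) ⁻¹' Set.Icc 0 1) := by
  set s₁ : Set ℝ := (fun x : ℝ => x ^ 2) ⁻¹' Set.Icc 0 1 with hs₁
  have hs₁m : MeasurableSet s₁ := (measurable_id.pow_const 2) measurableSet_Icc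
  rw [Measure.le_iff]
  intro E hE
  rw [Measure.smul_apply, smul_eq_mul, Measure.restrict_apply hE, Measure.restrict_apply hE,
    nu_apply_cv d b (hE.inter hs₁m), map_phi_apply d a (hE.inter hs₁m),
    ← lintegral_const_mul' _ _ ENNReal.ofReal_ne_top]
  apply setLIntegral_mono' ((continuous_phiFn d).measurable (hE.inter hs₁m))
  intro x hx
  have hmem : phiFn d x ∈ s₁ := (Set.mem_preimage.mp hx).2
  have hsq : (phiFn d x) ^ 2 ≤ 1 := (Set.mem_preimage.mp hmem).2
  have habs1 : |phiFn d x| ≤ 1 := by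
    rw [← Real.sqrt_one, ← Real.sqrt_sq_eq_abs]
    exact Real.sqrt_le_sqrt hsq
  rw [← ENNReal.ofReal_mul (by positivity), ← ENNReal.ofReal_mul (abs_nonneg _)]
  apply ENNReal.ofReal_le_ofReal
  have h1 : Real.exp (-(|x| ^ a)) ≤ 1 :=
    Real.exp_le_one_iff.mpr (neg_nonpos.mpr (Real.rpow_nonneg (abs_nonneg x) a))
  have h2 : Real.exp (-1 : ℝ) ≤ Real.exp (-(|phiFn d x| ^ b)) := by
    apply Real.exp_le_exp.mpr
    have : |phiFn d x| ^ b ≤ 1 := Real.rpow_le_one (abs_nonneg _) habs1 hb.le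
    linarith
  have h3 : 1 ≤ |phiD d x| := by
    rw [abs_of_pos (phiD_pos d x)]; exact phiD_ge_one d x
  have e1 := Real.exp_pos (-(1:ℝ))
  have e2 := Real.exp_pos (-(|phiFn d x| ^ b))
  nlinarith [Real.exp_pos (-(|x| ^ a))]

lemma rnDeriv_mono' {μ ν : Measure ℝ} [IsFiniteMeasure μ] [IsFiniteMeasure ν] (h : μ ≤ ν) :
    μ.rnDeriv volume ≤ᵐ[volume] ν.rnDeriv volume := by
  haveI : IsFiniteMeasure (ν - μ) := isFiniteMeasure_of_le ν Measure.sub_le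
  have h2 := Measure.rnDeriv_add (ν - μ) μ volume
  rw [Measure.sub_add_cancel_of_le h] at h2
  filter_upwards [h2] with x hx
  rw [hx]
  exact le_add_self

lemma gammaMeasure_eq (a : ℝ) : gammaMeasure a = (nuM a Set.univ)⁻¹ • nuM a := rfl

lemma isFiniteMeasure_smul {μ : Measure ℝ} [IsFiniteMeasure μ] {c : ℝ≥0∞} (hc : c ≠ ⊤) :
    IsFiniteMeasure (c • μ) :=
  ⟨by rw [Measure.smul_apply, smul_eq_mul]
      exact ENNReal.mul_lt_top hc.lt_top (measure_lt_top μ _)⟩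

lemma isFiniteMeasure_map {μ : Measure ℝ} [IsFiniteMeasure μ] {h : ℝ → ℝ} (hm : Measurable h) :
    IsFiniteMeasure (μ.map h) :=
  ⟨by rw [Measure.map_apply hm MeasurableSet.univ]; exact measure_lt_top μ _⟩

/-- density squeeze: for `g(x) = x² + x^{2d}` (`d > α`) and `f(x) = x²`,
there are `c₁, c₂ > 0` and `β ∈ (0,1)` so that a.e. the density of `f_#Γ_β` dominates
`c₁` times that of `g_#Γ_α` on `[0,1]`, and the density of `g_#Γ_α` dominates `c₂`
times that of `f_#Γ_β` on `[0,∞)`. -/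
theorem density_squeeze (α : ℝ) (hα : 0 < α) (d : ℕ) (hd : α < (d : ℝ))
    (g f : ℝ → ℝ) (hg : g = fun x => x ^ 2 + x ^ (2 * d)) (hf : f = fun x => x ^ 2) :
    ∃ c₁ > (0 : ℝ), ∃ c₂ > (0 : ℝ), ∃ β ∈ Set.Ioo (0 : ℝ) 1,
      (∀ᵐ x ∂(volume : Measure ℝ), x ∈ Set.Icc (0 : ℝ) 1 →
        ENNReal.ofReal c₁ * Measure.rnDeriv (Measure.map g (gammaMeasure α)) volume x
          ≤ Measure.rnDeriv (Measure.map f (gammaMeasure β)) volume x) ∧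
      (∀ᵐ x ∂(volume : Measure ℝ), 0 ≤ x →
        ENNReal.ofReal c₂ * Measure.rnDeriv (Measure.map f (gammaMeasure β)) volume x
          ≤ Measure.rnDeriv (Measure.map g (gammaMeasure α)) volume x) := by
  subst hg hf
  have hd0 : (0:ℝ) < d := hα.trans hd
  have hd1 : 1 ≤ d := by exact_mod_cast Nat.one_le_iff_ne_zero.mpr (by
    intro h0; rw [h0] at hd0; simp at hd0)
  have hdne : (d:ℝ) ≠ 0 := ne_of_gt hd0
  set β : ℝ := (α / d + 1) / 2 with hβ_def
  have hβ0 : 0 < β := by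
    have : 0 < α / d := div_pos hα hd0
    rw [hβ_def]; linarith
  have hβ1 : β < 1 := by
    have : α / d < 1 := (div_lt_one hd0).mpr hd
    rw [hβ_def]; linarith
  have hdb : α < (d:ℝ) * β := by
    have h1 : (d:ℝ) * β = (α + d) / 2 := by
      rw [hβ_def]; field_simp
    rw [h1]; linarith
  -- measurability
  have hf_meas : Measurable (fun x : ℝ => x ^ 2) := measurable_id.pow_const 2
  -- masses
  haveI : IsFiniteMeasure (nuM α) := ⟨nuM_lt_top α hα⟩
  haveI : IsFiniteMeasure (nuM β) := ⟨nuM_lt_top β hβ0⟩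
  set mα : ℝ≥0∞ := nuM α Set.univ with hmα_def
  set mβ : ℝ≥0∞ := nuM β Set.univ with hmβ_def
  have hmα0 : mα ≠ 0 := ne_of_gt (nuM_pos α hα)
  have hmαt : mα ≠ ⊤ := ne_of_lt (nuM_lt_top α hα)
  have hmβ0 : mβ ≠ 0 := ne_of_gt (nuM_pos β hβ0)
  have hmβt : mβ ≠ ⊤ := ne_of_lt (nuM_lt_top β hβ0)
  -- the factorization g = f ∘ φ
  set Mφ : Measure ℝ := Measure.map (phiFn d) (nuM α) with hMφ_def
  haveI : IsFiniteMeasure Mφ := isFiniteMeasure_map (continuous_phiFn d).measurable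
  have hgf : (fun x : ℝ => x ^ 2 + x ^ (2 * d)) = (fun x : ℝ => x ^ 2) ∘ phiFn d := by
    funext x
    simp only [Function.comp_apply]
    rw [phiFn_sq d hd1 x]
  have hmapg : Measure.map (fun x : ℝ => x ^ 2 + x ^ (2 * d)) (nuM α)
      = Measure.map (fun x : ℝ => x ^ 2) Mφ := by
    rw [hMφ_def, Measure.map_map hf_meas (continuous_phiFn d).measurable, ← hgf]
  -- core comparisons
  obtain ⟨cB, hcB, hcoreB⟩ := coreB d α β hd1 hα hβ0 hdb
  have hcoreA := coreA d α β hd1 hα hβ0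
  set s₁ : Set ℝ := (fun x : ℝ => x ^ 2) ⁻¹' Set.Icc 0 1 with hs₁_def
  -- constants
  set c₁ : ℝ := (mα * (mβ⁻¹ * ENNReal.ofReal (Real.exp (-1)))).toReal with hc₁_def
  set c₂ : ℝ := (mβ * (mα⁻¹ * ENNReal.ofReal cB)).toReal with hc₂_def
  have hEne0 : ENNReal.ofReal (Real.exp (-1)) ≠ 0 := by
    simp [ENNReal.ofReal_eq_zero, not_le, Real.exp_pos]
  have hBne0 : ENNReal.ofReal cB ≠ 0 := by
    simp [ENNReal.ofReal_eq_zero, not_le, hcB]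
  have hc₁K_ne_top : mα * (mβ⁻¹ * ENNReal.ofReal (Real.exp (-1))) ≠ ⊤ :=
    ENNReal.mul_ne_top hmαt (ENNReal.mul_ne_top (ENNReal.inv_ne_top.mpr hmβ0) ENNReal.ofReal_ne_top)
  have hc₂K_ne_top : mβ * (mα⁻¹ * ENNReal.ofReal cB) ≠ ⊤ :=
    ENNReal.mul_ne_top hmβt (ENNReal.mul_ne_top (ENNReal.inv_ne_top.mpr hmα0) ENNReal.ofReal_ne_top)
  have hc₁pos : 0 < c₁ := by
    rw [hc₁_def]
    apply ENNReal.toReal_pos _ hc₁K_ne_top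
    exact mul_ne_zero hmα0 (mul_ne_zero (ENNReal.inv_ne_zero.mpr hmβt) hEne0)
  have hc₂pos : 0 < c₂ := by
    rw [hc₂_def]
    apply ENNReal.toReal_pos _ hc₂K_ne_top
    exact mul_ne_zero hmβ0 (mul_ne_zero (ENNReal.inv_ne_zero.mpr hmαt) hBne0)
  -- finiteness of all relevant measures
  haveI : IsFiniteMeasure (gammaMeasure α) := by
    rw [gammaMeasure_eq]
    exact isFiniteMeasure_smul (ENNReal.inv_ne_top.mpr hmα0)
  haveI : IsFiniteMeasure (gammaMeasure β) := by
    rw [gammaMeasure_eq]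
    exact isFiniteMeasure_smul (ENNReal.inv_ne_top.mpr hmβ0)
  haveI hFg : IsFiniteMeasure (Measure.map (fun x : ℝ => x ^ 2 + x ^ (2 * d)) (gammaMeasure α)) :=
    isFiniteMeasure_map (by fun_prop)
  haveI hFf : IsFiniteMeasure (Measure.map (fun x : ℝ => x ^ 2) (gammaMeasure β)) :=
    isFiniteMeasure_map hf_meas
  -- KEY 2 : global inequality
  have hmapB : ENNReal.ofReal cB • Measure.map (fun x : ℝ => x ^ 2) (nuM β)
      ≤ Measure.map (fun x : ℝ => x ^ 2) Mφ := by
    have h := Measure.map_mono hcoreB hf_meas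
    rwa [Measure.map_smul] at h
  have hscal2 : ENNReal.ofReal c₂ * mβ⁻¹ = mα⁻¹ * ENNReal.ofReal cB := by
    rw [hc₂_def, ENNReal.ofReal_toReal hc₂K_ne_top]
    calc mβ * (mα⁻¹ * ENNReal.ofReal cB) * mβ⁻¹
        = (mβ * mβ⁻¹) * (mα⁻¹ * ENNReal.ofReal cB) := by ring
      _ = mα⁻¹ * ENNReal.ofReal cB := by
          rw [ENNReal.mul_inv_cancel hmβ0 hmβt, one_mul]
  have key2 : ENNReal.ofReal c₂ • Measure.map (fun x : ℝ => x ^ 2) (gammaMeasure β)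
      ≤ Measure.map (fun x : ℝ => x ^ 2 + x ^ (2 * d)) (gammaMeasure α) := by
    rw [gammaMeasure_eq, gammaMeasure_eq, Measure.map_smul, Measure.map_smul, hmapg,
      ← hmα_def, ← hmβ_def, smul_smul, hscal2]
    rw [Measure.le_iff]
    intro s hs
    rw [Measure.smul_apply, smul_eq_mul, Measure.smul_apply, smul_eq_mul, mul_assoc]
    apply mul_le_mul_right
    have := Measure.le_iff'.mp hmapB s
    rwa [Measure.smul_apply, smul_eq_mul] at this
  -- KEY 1 : restricted inequality
  have hresg : (Measure.map (fun x : ℝ => x ^ 2 + x ^ (2 * d)) (gammaMeasure α)).restrict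
          (Set.Icc 0 1)
      = mα⁻¹ • Measure.map (fun x : ℝ => x ^ 2) (Mφ.restrict s₁) := by
    rw [gammaMeasure_eq, Measure.map_smul, hmapg, ← hmα_def, Measure.restrict_smul,
      Measure.restrict_map hf_meas measurableSet_Icc, hs₁_def]
  have hmapA : ENNReal.ofReal (Real.exp (-1)) • Measure.map (fun x : ℝ => x ^ 2) (Mφ.restrict s₁)
      ≤ Measure.map (fun x : ℝ => x ^ 2) (nuM β) := by
    have h := Measure.map_mono hcoreA hf_meas
    rw [Measure.map_smul] at h
    refine h.trans ?_
    rw [← Measure.restrict_map hf_meas measurableSet_Icc]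
    exact Measure.restrict_le_self
  have hscal1 : ENNReal.ofReal c₁ * mα⁻¹ = mβ⁻¹ * ENNReal.ofReal (Real.exp (-1)) := by
    rw [hc₁_def, ENNReal.ofReal_toReal hc₁K_ne_top]
    calc mα * (mβ⁻¹ * ENNReal.ofReal (Real.exp (-1))) * mα⁻¹
        = (mα * mα⁻¹) * (mβ⁻¹ * ENNReal.ofReal (Real.exp (-1))) := by ring
      _ = mβ⁻¹ * ENNReal.ofReal (Real.exp (-1)) := by
          rw [ENNReal.mul_inv_cancel hmα0 hmαt, one_mul]
  have key1 : ENNReal.ofReal c₁ •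
        (Measure.map (fun x : ℝ => x ^ 2 + x ^ (2 * d)) (gammaMeasure α)).restrict (Set.Icc 0 1)
      ≤ Measure.map (fun x : ℝ => x ^ 2) (gammaMeasure β) := by
    rw [hresg, smul_smul, hscal1, gammaMeasure_eq, Measure.map_smul, ← hmβ_def]
    rw [Measure.le_iff]
    intro s hs
    rw [Measure.smul_apply, smul_eq_mul, Measure.smul_apply, smul_eq_mul, mul_assoc]
    apply mul_le_mul_right
    have := Measure.le_iff'.mp hmapA s
    rwa [Measure.smul_apply, smul_eq_mul] at this
  -- conclude
  refine ⟨c₁, hc₁pos, c₂, hc₂pos, β, ⟨hβ0, hβ1⟩, ?_, ?_⟩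
  · haveI : IsFiniteMeasure (ENNReal.ofReal c₁ •
        (Measure.map (fun x : ℝ => x ^ 2 + x ^ (2 * d)) (gammaMeasure α)).restrict
          (Set.Icc 0 1)) := isFiniteMeasure_smul ENNReal.ofReal_ne_top
    have hmono := rnDeriv_mono' key1
    have hsmul := Measure.rnDeriv_smul_left_of_ne_top
      ((Measure.map (fun x : ℝ => x ^ 2 + x ^ (2 * d)) (gammaMeasure α)).restrict (Set.Icc 0 1))
      volume (r := ENNReal.ofReal c₁) ENNReal.ofReal_ne_top
    have hres2 := Measure.rnDeriv_restrict
      (Measure.map (fun x : ℝ => x ^ 2 + x ^ (2 * d)) (gammaMeasure α)) volume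
      (measurableSet_Icc (a := (0:ℝ)) (b := 1))
    filter_upwards [hmono, hsmul, hres2] with x h1 h2 h3 hx
    have hind : Measure.rnDeriv
        ((Measure.map (fun x : ℝ => x ^ 2 + x ^ (2 * d)) (gammaMeasure α)).restrict (Set.Icc 0 1))
        volume x
        = Measure.rnDeriv (Measure.map (fun x : ℝ => x ^ 2 + x ^ (2 * d)) (gammaMeasure α))
            volume x := by
      rw [h3, Set.indicator_of_mem hx]
    calc ENNReal.ofReal c₁ *
          Measure.rnDeriv (Measure.map (fun x : ℝ => x ^ 2 + x ^ (2 * d)) (gammaMeasure α))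
            volume x
        = ENNReal.ofReal c₁ * Measure.rnDeriv
            ((Measure.map (fun x : ℝ => x ^ 2 + x ^ (2 * d)) (gammaMeasure α)).restrict
              (Set.Icc 0 1)) volume x := by rw [hind]
      _ = Measure.rnDeriv (ENNReal.ofReal c₁ •
            (Measure.map (fun x : ℝ => x ^ 2 + x ^ (2 * d)) (gammaMeasure α)).restrict
              (Set.Icc 0 1)) volume x := by rw [h2]; rfl
      _ ≤ Measure.rnDeriv (Measure.map (fun x : ℝ => x ^ 2) (gammaMeasure β)) volume x := h1
  · haveI : IsFiniteMeasure (ENNReal.ofReal c₂ •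
        Measure.map (fun x : ℝ => x ^ 2) (gammaMeasure β)) :=
      isFiniteMeasure_smul ENNReal.ofReal_ne_top
    have hmono := rnDeriv_mono' key2
    have hsmul := Measure.rnDeriv_smul_left_of_ne_top
      (Measure.map (fun x : ℝ => x ^ 2) (gammaMeasure β)) volume
      (r := ENNReal.ofReal c₂) ENNReal.ofReal_ne_top
    filter_upwards [hmono, hsmul] with x h1 h2 _
    calc ENNReal.ofReal c₂ *
          Measure.rnDeriv (Measure.map (fun x : ℝ => x ^ 2) (gammaMeasure β)) volume x
        = Measure.rnDeriv (ENNReal.ofReal c₂ •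
            Measure.map (fun x : ℝ => x ^ 2) (gammaMeasure β)) volume x := by rw [h2]; rfl
      _ ≤ Measure.rnDeriv (Measure.map (fun x : ℝ => x ^ 2 + x ^ (2 * d)) (gammaMeasure α))
            volume x := h1
end
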